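/- arXiv:1505.05071 — 9 statements merged into one kernel-verified Lean document; each statement's English description precedes it below -/
import Mathlib

section
/- Let m ≥ 2 be an integer, c > 0 an integer, and a ≥ 1 an integer. Define R = ⌈(m/a)·⌈(m+c)/a⌉ + c/a⌉ (ceilings of rationals). Then the 2-coloring of {1, ..., R−1} that colors {1, ..., ⌈(m+c)/a⌉ − 1} red and {⌈(m+c)/a⌉, ..., R−1} blue admits no monochromatic solution to x_1 + x_2 + ... + x_m + c = a·x_0 with all variables in {1, ..., R−1}. -/
/-- lower-bound coloring for `x_1 + ... + x_m + c = a·x_0`: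
with `B = ⌈(m+c)/a⌉` and `R = ⌈(m·B + c)/a⌉`, coloring `{1,...,B-1}` red and
`{B,...,R-1}` blue admits no monochromatic solution in `{1,...,R-1}`. -/
theorem stmt1 (m c a : ℤ) (hm : 2 ≤ m) (hc : 0 < c) (ha : 1 ≤ a) :
    ¬ ∃ (x : Fin m.toNat → ℤ) (x0 : ℤ),
      (∀ i, x i ∈ Finset.Icc 1 (⌈((m : ℚ) * ⌈((m : ℚ) + c) / a⌉ + c) / a⌉ - 1)) ∧
      x0 ∈ Finset.Icc 1 (⌈((m : ℚ) * ⌈((m : ℚ) + c) / a⌉ + c) / a⌉ - 1) ∧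
      ((∀ i, x i < ⌈((m : ℚ) + c) / a⌉) ∧ x0 < ⌈((m : ℚ) + c) / a⌉ ∨
       (∀ i, ⌈((m : ℚ) + c) / a⌉ ≤ x i) ∧ ⌈((m : ℚ) + c) / a⌉ ≤ x0) ∧
      (∑ i, x i) + c = a * x0 := by
  rintro ⟨x, x0, hx, hx0, hcase, heq⟩
  set B : ℤ := ⌈((m : ℚ) + c) / a⌉ with hB
  set R : ℤ := ⌈((m : ℚ) * B + c) / a⌉ with hR
  have ha0 : (0 : ℚ) < a := by exact_mod_cast lt_of_lt_of_le one_pos ha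
  have hcancel1 : (a : ℚ) * (((m : ℚ) + c) / a) = (m : ℚ) + c := by
    field_simp
  have hcancel2 : (a : ℚ) * (((m : ℚ) * B + c) / a) = (m : ℚ) * B + c := by
    field_simp
  have hBprop : a * (B - 1) < m + c := by
    have h2 : (B : ℚ) < ((m : ℚ) + c) / a + 1 := Int.ceil_lt_add_one _
    have h3 : (a : ℚ) * ((B : ℚ) - 1) < (m : ℚ) + c := by nlinarith
    exact_mod_cast h3
  have hRprop : a * (R - 1) < m * B + c := by
    have h2 : (R : ℚ) < ((m : ℚ) * B + c) / a + 1 := Int.ceil_lt_add_one _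
    have h3 : (a : ℚ) * ((R : ℚ) - 1) < (m : ℚ) * B + c := by nlinarith
    exact_mod_cast h3
  have hmnat : (m.toNat : ℤ) = m := Int.toNat_of_nonneg (by omega)
  have hcard : (Finset.univ : Finset (Fin m.toNat)).card = m.toNat := by simp
  rcases hcase with ⟨hxred, hx0red⟩ | ⟨hxblue, hx0blue⟩
  · -- red: all < B
    have hsum : (m : ℤ) ≤ ∑ i, x i := by
      have := Finset.card_nsmul_le_sum Finset.univ x 1
        (fun i _ => (Finset.mem_Icc.mp (hx i)).1)
      rw [hcard] at this
      simpa [hmnat] using this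
    have hx0le : x0 ≤ B - 1 := by omega
    have : a * x0 ≤ a * (B - 1) := by
      apply mul_le_mul_of_nonneg_left hx0le (by omega)
    omega
  · -- blue: all ≥ B
    have hsum : m * B ≤ ∑ i, x i := by
      have := Finset.card_nsmul_le_sum Finset.univ x B (fun i _ => hxblue i)
      rw [hcard] at this
      have h4 : (m.toNat : ℤ) * B ≤ ∑ i, x i := by
        simpa [nsmul_eq_mul] using this
      rwa [hmnat] at h4
    have hx0le : x0 ≤ R - 1 := (Finset.mem_Icc.mp hx0).2
    have : a * x0 ≤ a * (R - 1) := by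
      apply mul_le_mul_of_nonneg_left hx0le (by omega)
    omega
end

section
/- For every integer c ≥ 1, every 2-coloring of {1, 2, ..., c+1} admits a monochromatic solution to x_1 + x_2 + c = 2·x_0. In particular R(2,c,2) ≤ c+1. -/
/-- for every integer `c ≥ 1` (with `c` even, so that the Rado
number is finite), every 2-coloring of `{1,...,c+1}` admits a monochromatic
solution to `x_1 + x_2 + c = 2·x_0`; i.e. `R(2,c,2) ≤ c+1`. -/
theorem stmt4 (c : ℕ) (hc : 1 ≤ c) (hce : Even c) (Δ : ℕ → Fin 2) :
    ∃ x1 x2 x0 : ℕ, x1 ∈ Finset.Icc 1 (c + 1) ∧ x2 ∈ Finset.Icc 1 (c + 1) ∧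
      x0 ∈ Finset.Icc 1 (c + 1) ∧ Δ x1 = Δ x0 ∧ Δ x2 = Δ x0 ∧
      x1 + x2 + c = 2 * x0 := by
  obtain ⟨k, hk⟩ := hce
  subst hk
  have hk1 : 1 ≤ k := by omega
  set m := k + 1 with hm
  by_cases h1 : Δ 1 = Δ (k + k + 1)
  · exact ⟨1, k + k + 1, k + k + 1, by simp [Finset.mem_Icc],
      by simp [Finset.mem_Icc], by simp [Finset.mem_Icc], h1, rfl, by omega⟩
  · by_cases h2 : Δ 1 = Δ m
    · exact ⟨1, 1, m, by simp [Finset.mem_Icc],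
        by simp [Finset.mem_Icc], by simp [Finset.mem_Icc]; omega,
        h2, h2, by omega⟩
    · have h3 : Δ m = Δ (k + k + 1) := by
        have := Δ 1; have := Δ m; have := Δ (k + k + 1)
        omega
      exact ⟨m, m, k + k + 1, by simp [Finset.mem_Icc]; omega,
        by simp [Finset.mem_Icc]; omega, by simp [Finset.mem_Icc],
        h3, h3, by omega⟩
end

section
/- Every 2-coloring of {1, 2, ..., 7} admits a monochromatic solution to x_1 + x_2 + x_3 + x_4 + 2 = 2·x_0, and there is a 2-coloring of {1,...,6} admitting none. That is, R(4,2,2) = 7. -/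
set_option maxRecDepth 2000

def sols7 : List (Fin 8 × Fin 8 × Fin 8 × Fin 8 × Fin 8) :=
  [(1,1,1,1,3),(1,1,1,3,4),(1,1,1,5,5),(1,1,1,7,6),(1,1,2,2,4),(1,1,2,4,5),
   (1,1,2,6,6),(1,1,3,3,5),(1,1,3,5,6),(1,1,3,7,7),(1,1,4,4,6),(1,1,4,6,7),
   (1,1,5,5,7),(1,2,2,3,5),(1,2,2,5,6),(1,2,2,7,7),(1,2,3,4,6),(1,2,3,6,7),
   (1,2,4,5,7),(1,3,3,3,6),(1,3,3,5,7),(1,3,4,4,7),(2,2,2,2,5),(2,2,2,4,6),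
   (2,2,2,6,7),(2,2,3,3,6),(2,2,3,5,7),(2,2,4,4,7),(2,3,3,4,7),(3,3,3,3,7)]

lemma key7 : ∀ f : Fin 8 → Fin 2, ∃ s ∈ sols7,
    f s.1 = f s.2.2.2.2 ∧ f s.2.1 = f s.2.2.2.2 ∧ f s.2.2.1 = f s.2.2.2.2 ∧
    f s.2.2.2.1 = f s.2.2.2.2 := by decide

lemma props7 : ∀ s ∈ sols7,
    (1 ≤ s.1.val ∧ s.1.val ≤ 7) ∧ (1 ≤ s.2.1.val ∧ s.2.1.val ≤ 7) ∧
    (1 ≤ s.2.2.1.val ∧ s.2.2.1.val ≤ 7) ∧ (1 ≤ s.2.2.2.1.val ∧ s.2.2.2.1.val ≤ 7) ∧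
    (1 ≤ s.2.2.2.2.val ∧ s.2.2.2.2.val ≤ 7) ∧
    s.1.val + s.2.1.val + s.2.2.1.val + s.2.2.2.1.val + 2 = 2 * s.2.2.2.2.val := by
  intro s hs; fin_cases hs <;> decide

lemma no6 : ∀ a b c d e : Fin 7, 1 ≤ a.val → 1 ≤ b.val → 1 ≤ c.val → 1 ≤ d.val →
    1 ≤ e.val → a.val + b.val + c.val + d.val + 2 = 2 * e.val →
    ¬((if a.val ≤ 2 then (0:Fin 2) else 1) = (if e.val ≤ 2 then 0 else 1) ∧
      (if b.val ≤ 2 then (0:Fin 2) else 1) = (if e.val ≤ 2 then 0 else 1) ∧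
      (if c.val ≤ 2 then (0:Fin 2) else 1) = (if e.val ≤ 2 then 0 else 1) ∧
      (if d.val ≤ 2 then (0:Fin 2) else 1) = (if e.val ≤ 2 then 0 else 1)) := by decide

/-- R(4,2,2) = 7. -/
theorem stmt7 :
    (∀ Δ : ℕ → Fin 2, ∃ (x : Fin 4 → ℕ) (x0 : ℕ),
        (∀ i, x i ∈ Finset.Icc 1 7) ∧ x0 ∈ Finset.Icc 1 7 ∧
        (∀ i, Δ (x i) = Δ x0) ∧ (∑ i, x i) + 2 = 2 * x0) ∧
    (∃ Δ : ℕ → Fin 2, ¬ ∃ (x : Fin 4 → ℕ) (x0 : ℕ),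
        (∀ i, x i ∈ Finset.Icc 1 (7 - 1)) ∧ x0 ∈ Finset.Icc 1 (7 - 1) ∧
        (∀ i, Δ (x i) = Δ x0) ∧ (∑ i, x i) + 2 = 2 * x0) := by
  constructor
  · intro Δ
    obtain ⟨s, hs, h1, h2, h3, h4⟩ := key7 (fun n => Δ n.val)
    obtain ⟨⟨ha1, ha2⟩, ⟨hb1, hb2⟩, ⟨hc1, hc2⟩, ⟨hd1, hd2⟩, ⟨he1, he2⟩, heq⟩ := props7 s hs
    refine ⟨![s.1.val, s.2.1.val, s.2.2.1.val, s.2.2.2.1.val], s.2.2.2.2.val, ?_, ?_, ?_, ?_⟩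
    · intro i; fin_cases i <;> simp [Finset.mem_Icc] <;> omega
    · simp [Finset.mem_Icc]; omega
    · intro i; fin_cases i <;> assumption
    · simp [Fin.sum_univ_four]; omega
  · refine ⟨fun n => if n ≤ 2 then 0 else 1, ?_⟩
    rintro ⟨x, x0, h1, h2, h3, h4⟩
    simp only [Finset.mem_Icc] at h1 h2
    have b0 := h1 0; have b1 := h1 1; have b2 := h1 2; have b3 := h1 3
    have heq : x 0 + x 1 + x 2 + x 3 + 2 = 2 * x0 := by
      rw [Fin.sum_univ_four] at h4; omega
    refine no6 ⟨x 0, by omega⟩ ⟨x 1, by omega⟩ ⟨x 2, by omega⟩ ⟨x 3, by omega⟩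
      ⟨x0, by omega⟩ (by simp; omega) (by simp; omega) (by simp; omega) (by simp; omega)
      (by simp; omega) (by simp; omega) ⟨h3 0, h3 1, h3 2, h3 3⟩
end

section
/- Every 2-coloring of {1, ..., 11} admits a monochromatic solution to x_1 + x_2 + x_3 + x_4 + x_5 + 2 = 2·x_0. That is, R(5,2,2) ≤ 11. -/
set_option synthInstance.maxSize 2000 in
set_option maxHeartbeats 1000000 in
lemma key10 : ∀ (c1 c2 c3 c4 c5 c6 c7 c8 c9 c10 c11 : Fin 2),
    (c1 = c6) ∨ (c2 = c6) ∨ (c1 = c2 ∧ c1 = c4) ∨ (c1 = c2 ∧ c1 = c7) ∨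
    (c1 = c2 ∧ c1 = c5) ∨ (c1 = c2 ∧ c1 = c8) ∨ (c1 = c2 ∧ c1 = c9) ∨
    (c2 = c10) ∨ (c3 = c4 ∧ c3 = c9) ∨ (c1 = c2 ∧ c1 = c3 ∧ c1 = c11) ∨
    (c4 = c11) := by decide

theorem stmt10 (Δ : ℕ → Fin 2) :
    ∃ (x : Fin 5 → ℕ) (x0 : ℕ),
      (∀ i, x i ∈ Finset.Icc 1 11) ∧ x0 ∈ Finset.Icc 1 11 ∧
      (∀ i, Δ (x i) = Δ x0) ∧ (∑ i, x i) + 2 = 2 * x0 := by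
  rcases key10 (Δ 1) (Δ 2) (Δ 3) (Δ 4) (Δ 5) (Δ 6) (Δ 7) (Δ 8) (Δ 9) (Δ 10) (Δ 11) with
    h | h | ⟨h1, h2⟩ | ⟨h1, h2⟩ | ⟨h1, h2⟩ | ⟨h1, h2⟩ | ⟨h1, h2⟩ | h | ⟨h1, h2⟩ |
    ⟨h1, h2, h3⟩ | h
  · exact ⟨![1,1,1,1,6], 6, by decide, by decide,
      fun i => by fin_cases i <;> simp_all, by decide⟩
  · exact ⟨![2,2,2,2,2], 6, by decide, by decide,
      fun i => by fin_cases i <;> simp_all, by decide⟩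
  · exact ⟨![1,1,1,1,2], 4, by decide, by decide,
      fun i => by fin_cases i <;> simp_all, by decide⟩
  · exact ⟨![1,1,1,2,7], 7, by decide, by decide,
      fun i => by fin_cases i <;> simp_all, by decide⟩
  · exact ⟨![1,1,2,2,2], 5, by decide, by decide,
      fun i => by fin_cases i <;> simp_all, by decide⟩
  · exact ⟨![1,1,2,2,8], 8, by decide, by decide,
      fun i => by fin_cases i <;> simp_all, by decide⟩
  · exact ⟨![1,2,2,2,9], 9, by decide, by decide,
      fun i => by fin_cases i <;> simp_all, by decide⟩
  · exact ⟨![2,2,2,2,10], 10, by decide, by decide,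
      fun i => by fin_cases i <;> simp_all, by decide⟩
  · exact ⟨![3,3,3,3,4], 9, by decide, by decide,
      fun i => by fin_cases i <;> simp_all, by decide⟩
  · exact ⟨![1,2,3,3,11], 11, by decide, by decide,
      fun i => by fin_cases i <;> simp_all, by decide⟩
  · exact ⟨![4,4,4,4,4], 11, by decide, by decide,
      fun i => by fin_cases i <;> simp_all, by decide⟩
end

section
/- Every 2-coloring of {1, ..., 8} admits a monochromatic solution to x_1 + x_2 + x_3 + x_4 + x_5 + 1 = 2·x_0. That is, R(5,1,2) ≤ 8. -/
lemma fin2_trans (a b c : Fin 2) (h1 : a ≠ b) (h2 : b ≠ c) : a = c := by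
  fin_cases a <;> fin_cases b <;> fin_cases c <;> simp_all

lemma key (Δ : ℕ → Fin 2) (a b c d e f : ℕ)
    (hm : 1 ≤ a ∧ a ≤ 8 ∧ 1 ≤ b ∧ b ≤ 8 ∧ 1 ≤ c ∧ c ≤ 8 ∧ 1 ≤ d ∧ d ≤ 8 ∧
      1 ≤ e ∧ e ≤ 8 ∧ 1 ≤ f ∧ f ≤ 8)
    (h1 : Δ a = Δ f) (h2 : Δ b = Δ f) (h3 : Δ c = Δ f) (h4 : Δ d = Δ f) (h5 : Δ e = Δ f)
    (hs : a + b + c + d + e + 1 = 2 * f) :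
    ∃ (x : Fin 5 → ℕ) (x0 : ℕ),
      (∀ i, x i ∈ Finset.Icc 1 8) ∧ x0 ∈ Finset.Icc 1 8 ∧
      (∀ i, Δ (x i) = Δ x0) ∧ (∑ i, x i) + 1 = 2 * x0 := by
  refine ⟨![a,b,c,d,e], f, ?_, ?_, ?_, ?_⟩
  · intro i; fin_cases i <;> simp [Finset.mem_Icc] <;> omega
  · simp [Finset.mem_Icc]; omega
  · intro i; fin_cases i <;> assumption
  · simp [Fin.sum_univ_five]; omega

theorem stmt11 (Δ : ℕ → Fin 2) :
    ∃ (x : Fin 5 → ℕ) (x0 : ℕ),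
      (∀ i, x i ∈ Finset.Icc 1 8) ∧ x0 ∈ Finset.Icc 1 8 ∧
      (∀ i, Δ (x i) = Δ x0) ∧ (∑ i, x i) + 1 = 2 * x0 := by
  rcases eq_or_ne (Δ 1) (Δ 3) with h13 | h13
  · exact key Δ 1 1 1 1 1 3 (by norm_num) h13 h13 h13 h13 h13 (by norm_num)
  rcases eq_or_ne (Δ 3) (Δ 8) with h38 | h38
  · exact key Δ 3 3 3 3 3 8 (by norm_num) h38 h38 h38 h38 h38 (by norm_num)
  have h18 : Δ 1 = Δ 8 := fin2_trans _ _ _ h13 h38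
  rcases eq_or_ne (Δ 6) (Δ 1) with h6 | h6
  · -- (1,1,1,6,6 ; 8)
    exact key Δ 1 1 1 6 6 8 (by norm_num) h18 h18 h18 (h6.trans h18) (h6.trans h18)
      (by norm_num)
  have h63 : Δ 6 = Δ 3 := fin2_trans _ _ _ h6 h13
  rcases eq_or_ne (Δ 4) (Δ 1) with h4 | h4
  · -- (1,1,1,4,8 ; 8)
    exact key Δ 1 1 1 4 8 8 (by norm_num) h18 h18 h18 (h4.trans h18) rfl (by norm_num)
  have h43 : Δ 4 = Δ 3 := fin2_trans _ _ _ h4 h13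
  rcases eq_or_ne (Δ 2) (Δ 1) with h2 | h2
  · -- (1,2,2,2,8 ; 8)
    exact key Δ 1 2 2 2 8 8 (by norm_num) h18 (h2.trans h18) (h2.trans h18) (h2.trans h18)
      rfl (by norm_num)
  have h23 : Δ 2 = Δ 3 := fin2_trans _ _ _ h2 h13
  -- (2,2,2,2,3 ; 6)
  exact key Δ 2 2 2 2 3 6 (by norm_num) (h23.trans h63.symm) (h23.trans h63.symm)
    (h23.trans h63.symm) (h23.trans h63.symm) h63.symm (by norm_num)
end

section
/- Let a > 1 and c > 0 be real numbers. Define the coloring of the real interval [1, c/(a−1)) that colors x red if the unique k ≥ 0 with (c(a^k−1)+a−1)/(a^k(a−1)) ≤ x < (c(a^{k+1}−1)+a−1)/(a^{k+1}(a−1)) is even, and blue if k is odd (with the k=0 interval being [1, (c+a−1)/a)). Then this coloring admits no monochromatic pair x_1, x_0 ∈ [1, c/(a−1)) with x_1 + c = a·x_0. -/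
/-- for real `a > 1`, `c > 0`, the coloring of `[1, c/(a-1))` by
parity of the index `k` of the interval
`I_k = [(c(a^k-1)+a-1)/(a^k(a-1)), (c(a^(k+1))-1)+a-1)/(a^(k+1)(a-1)))`
admits no monochromatic pair `x_1, x_0` with `x_1 + c = a·x_0`. -/
theorem stmt14 (a c : ℝ) (ha : 1 < a) (hc : 0 < c) (k l : ℕ) (x1 x0 : ℝ)
    (hx1 : x1 ∈ Set.Ico ((c * (a ^ k - 1) + a - 1) / (a ^ k * (a - 1)))
        ((c * (a ^ (k + 1) - 1) + a - 1) / (a ^ (k + 1) * (a - 1))))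
    (hx0 : x0 ∈ Set.Ico ((c * (a ^ l - 1) + a - 1) / (a ^ l * (a - 1)))
        ((c * (a ^ (l + 1) - 1) + a - 1) / (a ^ (l + 1) * (a - 1))))
    (hcol : k % 2 = l % 2) :
    x1 + c ≠ a * x0 := by
  intro heq
  have ha1 : (0:ℝ) < a - 1 := by linarith
  have ha0 : (0:ℝ) < a := by linarith
  have hpk : ∀ n : ℕ, (0:ℝ) < a ^ n := fun n => pow_pos ha0 n
  set L : ℕ → ℝ := fun m => (c * (a ^ m - 1) + a - 1) / (a ^ m * (a - 1)) with hLdef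
  have hx1a : L k ≤ x1 := hx1.1
  have hx1b : x1 < L (k + 1) := hx1.2
  have hx0a : L l ≤ x0 := hx0.1
  have hx0b : x0 < L (l + 1) := hx0.2
  have hstep : ∀ m : ℕ, L (m + 1) - L m = (c - (a - 1)) / a ^ (m + 1) := by
    intro m
    have h1 := (hpk m).ne'
    have h2 := (hpk (m + 1)).ne'
    simp only [hLdef]
    field_simp
    ring
  rcases le_or_gt c (a - 1) with hd | hd
  · -- interval I_k is empty
    have h := hstep k
    have : (c - (a - 1)) / a ^ (k + 1) ≤ 0 :=
      div_nonpos_of_nonpos_of_nonneg (by linarith) (hpk (k + 1)).le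
    linarith
  · -- monotone case
    have hmono : Monotone L := by
      apply monotone_nat_of_le_succ
      intro m
      have h := hstep m
      have : 0 ≤ (c - (a - 1)) / a ^ (m + 1) :=
        div_nonneg (by linarith) (hpk (m + 1)).le
      linarith
    have hmap : ∀ m : ℕ, a * L (m + 1) - c = L m := by
      intro m
      have h1 := (hpk m).ne'
      have h2 := (hpk (m + 1)).ne'
      simp only [hLdef]
      field_simp
      ring
    have hx1eq : x1 = a * x0 - c := by linarith
    have hub : x1 < L l := by
      have := hmap l
      have : a * x0 < a * L (l + 1) := by
        exact (mul_lt_mul_iff_right₀ ha0).mpr hx0b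
      have h2 := hmap l
      linarith
    cases l with
    | zero =>
      have hL0 : L 0 = 1 := by
        simp only [hLdef]
        norm_num
        field_simp
        exact ha1.ne'
      have : L 0 ≤ L k := hmono (Nat.zero_le k)
      linarith
    | succ l' =>
      have hlb : L l' ≤ x1 := by
        have h2 := hmap l'
        have : a * L (l' + 1) ≤ a * x0 := (mul_le_mul_iff_right₀ ha0).mpr hx0a
        linarith
      rcases lt_trichotomy k l' with h | h | h
      · have : L (k + 1) ≤ L l' := hmono h
        linarith
      · subst h
        omega
      · have : L (l' + 1) ≤ L k := hmono h
        linarith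
end

section
/- Let a > 1 and c > 0 be real numbers with x_1 ∈ I_k := [(c(a^k−1)+a−1)/(a^k(a−1)), (c(a^{k+1}−1)+a−1)/(a^{k+1}(a−1))). If x_1 + c = a·x_0, then x_0 ∈ I_{k+1}. -/
/-- for real `a > 1`, `c > 0`, if `x_1 ∈ I_k` and `x_1 + c = a·x_0`
then `x_0 ∈ I_(k+1)`. -/
theorem stmt15 (a c : ℝ) (ha : 1 < a) (hc : 0 < c) (k : ℕ) (x1 x0 : ℝ)
    (hx1 : x1 ∈ Set.Ico ((c * (a ^ k - 1) + a - 1) / (a ^ k * (a - 1)))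
        ((c * (a ^ (k + 1) - 1) + a - 1) / (a ^ (k + 1) * (a - 1))))
    (heq : x1 + c = a * x0) :
    x0 ∈ Set.Ico ((c * (a ^ (k + 1) - 1) + a - 1) / (a ^ (k + 1) * (a - 1)))
        ((c * (a ^ (k + 2) - 1) + a - 1) / (a ^ (k + 2) * (a - 1))) := by
  obtain ⟨h1, h2⟩ := hx1
  have ha0 : (0:ℝ) < a := by linarith
  have hp : 0 < a ^ k := pow_pos ha0 k
  have hd : (0:ℝ) < a - 1 := by linarith
  rw [div_le_iff₀ (by positivity)] at h1
  rw [lt_div_iff₀ (by positivity)] at h2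
  simp only [pow_succ] at *
  constructor
  · rw [div_le_iff₀ (by positivity)]
    have e : x0 * (a^k*a*(a-1)) = (x1+c)*(a^k*(a-1)) := by rw [heq]; ring
    nlinarith [h1, e, mul_pos hp hd]
  · rw [lt_div_iff₀ (by positivity)]
    have e : x0 * (a^k*a*a*(a-1)) = (x1+c)*(a^k*a*(a-1)) := by rw [heq]; ring
    nlinarith [h2, e, mul_pos (mul_pos hp ha0) hd]
end

section
/- Let c > 0 be a real number. Color a real number x ≥ 1 red if the unique integer k ≥ 0 with kc+1 ≤ x < (k+1)c+1 is even, blue otherwise. Then there is no monochromatic pair x_1, x_0 ≥ 1 of the same color with x_1 + c = x_0. Hence the 2-color continuous Rado number for x_1 + c = 1·x_0 is infinite. -/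
/-- for real `c > 0`, coloring `x ≥ 1` by the parity of the unique
`k` with `kc+1 ≤ x < (k+1)c+1`, there is no monochromatic pair with
`x_1 + c = x_0`; hence the continuous Rado number for `x_1 + c = 1·x_0` is
infinite. -/
theorem stmt16 (c : ℝ) (hc : 0 < c) (k l : ℕ) (x1 x0 : ℝ)
    (hx1 : x1 ∈ Set.Ico ((k : ℝ) * c + 1) (((k : ℝ) + 1) * c + 1))
    (hx0 : x0 ∈ Set.Ico ((l : ℝ) * c + 1) (((l : ℝ) + 1) * c + 1))
    (hcol : k % 2 = l % 2) :
    x1 + c ≠ x0 := by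
  obtain ⟨h1, h2⟩ := hx1
  obtain ⟨h3, h4⟩ := hx0
  intro h
  subst h
  have hkl : (k : ℝ) < l := by nlinarith
  have hlk : (l : ℝ) < k + 2 := by nlinarith
  have : k < l := by exact_mod_cast hkl
  have : l < k + 2 := by exact_mod_cast hlk
  omega
end

section
/- Let a > 1 and c > 0 be integers with (a−1) not dividing c. Then there exists a 2-coloring of all positive integers with no monochromatic solution to x_1 + c = a·x_0; i.e., the discrete 2-color Rado number R(1,c,a) is infinite. -/
/-- for integers `a > 1`, `c > 0` with `(a-1) ∤ c`, there is a
2-coloring of the positive integers with no monochromatic solution to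
`x_1 + c = a·x_0`; i.e. `R(1,c,a)` is infinite. -/
theorem stmt18 (a c : ℕ) (ha : 1 < a) (hc : 0 < c) (hdvd : ¬ (a - 1) ∣ c) :
    ∃ Δ : ℕ → Fin 2, ∀ x1 x0 : ℕ, 0 < x1 → 0 < x0 → Δ x1 = Δ x0 →
      x1 + c ≠ a * x0 := by
  refine ⟨fun x => if Nat.log a (((a : ℤ) - 1) * x - c).natAbs % 2 = 0 then 0 else 1,
    fun x1 x0 hx1 hx0 hΔ heq => ?_⟩
  set u0 : ℤ := ((a : ℤ) - 1) * x0 - c with hu0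
  set u1 : ℤ := ((a : ℤ) - 1) * x1 - c with hu1
  have hx1int : (x1 : ℤ) = a * x0 - c := by
    have : (x1 : ℤ) + c = a * x0 := by exact_mod_cast congrArg (Nat.cast : ℕ → ℤ) heq
    linarith
  have hmul : u1 = a * u0 := by
    rw [hu1, hu0, hx1int]; ring
  have hu0ne : u0 ≠ 0 := by
    intro h
    apply hdvd
    have hcast : ((a : ℤ) - 1) = ((a - 1 : ℕ) : ℤ) := by
      have : (1 : ℕ) ≤ a := le_of_lt ha
      push_cast [this]; ring
    have : ((a - 1 : ℕ) : ℤ) ∣ (c : ℤ) := ⟨x0, by rw [← hcast]; linarith [h]⟩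
    exact_mod_cast this
  have habs : u1.natAbs = a * u0.natAbs := by
    rw [hmul, Int.natAbs_mul, Int.natAbs_natCast]
  have hlog : Nat.log a u1.natAbs = Nat.log a u0.natAbs + 1 := by
    rw [habs, mul_comm, Nat.log_mul_base ha (Int.natAbs_ne_zero.mpr hu0ne)]
  simp only [← hu0, ← hu1, hlog] at hΔ
  by_cases h : Nat.log a u0.natAbs % 2 = 0
  · have h1 : (Nat.log a u0.natAbs + 1) % 2 = 1 := by omega
    simp [h, h1] at hΔ
  · have h1 : (Nat.log a u0.natAbs + 1) % 2 = 0 := by omega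
    simp [h, h1] at hΔ
end
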